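/- Let M be a conditional oriented matroid on I, F a flat, and B ⊆ F a nonbasic set with closure F (minimal flat containing it), where some proper subset B' ⊊ B satisfies B̄' = F. Then for every covector X ∈ M, the polynomial ∏_{c∈C} z_c − ∏_{b∈B} z_b vanishes at the point z_X, where C ⊆ F has closure F and B ⊊ C is basic for F; that is, ∏_{c∈C} z_c − ∏_{b∈B} z_b lies in the vanishing ideal I(Z_M); hence its top-degree component ∏_{c∈C} z_c lies in gr I(Z_M). -/

import Mathlib

/-- The composition `X ∘ Y` of signed subsets of `I`. -/
def scomp {I : Type*} (X Y : I → SignType) : I → SignType :=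
  fun i => if X i ≠ 0 then X i else Y i

/-- The separating set of two signed subsets. -/
def sepSet {I : Type*} (X Y : I → SignType) : Set I :=
  {i | X i = -(Y i) ∧ X i ≠ 0}

/-- A conditional oriented matroid on the ground set `I`. -/
structure IsCOM {I : Type*} (M : Set (I → SignType)) : Prop where
  faceSym : ∀ X ∈ M, ∀ Y ∈ M, scomp X (-Y) ∈ M
  strongElim : ∀ X ∈ M, ∀ Y ∈ M, ∀ i ∈ sepSet X Y,
    ∃ Z ∈ M, Z i = 0 ∧ ∀ j ∉ sepSet X Y, Z j = scomp X Y j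

/-- The flat (zero set) of a covector. -/
def sflat {I : Type*} (X : I → SignType) : Set I := {i | X i = 0}

/-- The collection of flats of a conditional oriented matroid. -/
def flats {I : Type*} (M : Set (I → SignType)) : Set (Set I) :=
  {F | ∃ X ∈ M, sflat X = F}

/-- `F` is the minimal flat of `M` containing `C` (the closure `C̄` of `C`). -/
def minimalFlatOf {I : Type*} (M : Set (I → SignType)) (C F : Set I) : Prop :=
  F ∈ flats M ∧ C ⊆ F ∧ ∀ F' ∈ flats M, C ⊆ F' → F ⊆ F'

/-- `B` is basic for the flat `F`: the closure of `B` is `F` and no proper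
subset of `B` has closure `F`. -/
def IsBasic {I : Type*} (M : Set (I → SignType)) (B : Finset I) (F : Set I) : Prop :=
  minimalFlatOf M (B : Set I) F ∧
    ∀ B' ⊆ B, minimalFlatOf M (B' : Set I) F → B' = B

/-- The 0/1 point `z_X ∈ K^{I × {+,-,0}}` attached to a covector `X`. -/
def bigPoint (K : Type*) [Field K] {I : Type*} (X : I → SignType) :
    I × SignType → K :=
  fun p => if X p.1 = p.2 then 1 else 0

/-- The big locus `Z_M ⊆ K^{I × {+,-,0}}` of a conditional oriented matroid. -/
def bigLocus (K : Type*) [Field K] {I : Type*} (M : Set (I → SignType)) :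
    Set (I × SignType → K) :=
  (fun X => bigPoint K X) '' M

/-- The vanishing ideal of a set of points of `K^σ`. -/
noncomputable def vanishingIdeal (K : Type*) [Field K] {σ : Type*} (Z : Set (σ → K)) :
    Ideal (MvPolynomial σ K) :=
  ⨅ z ∈ Z, RingHom.ker (MvPolynomial.eval z)

/-- The associated graded ideal `gr I(Z)`, generated by the top-degree
homogeneous components of the nonzero elements of `I(Z)`. -/
noncomputable def grIdeal (K : Type*) [Field K] {σ : Type*} (Z : Set (σ → K)) :
    Ideal (MvPolynomial σ K) :=
  Ideal.span {g | ∃ f ∈ vanishingIdeal K Z, f ≠ 0 ∧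
    g = MvPolynomial.homogeneousComponent f.totalDegree f}


open MvPolynomial Finsupp in
lemma degree_sum_single {σ α : Type*} [DecidableEq σ] (s : Finset α) (f : α → σ) :
    Finsupp.degree (∑ a ∈ s, Finsupp.single (f a) 1) = s.card := by
  classical
  rw [Finsupp.degree_eq_weight_one, map_sum]
  rw [Finset.sum_congr rfl (fun a _ => (by
    simp [Finsupp.weight_apply, Finsupp.sum_single_index] :
      (Finsupp.weight (fun _ => 1 : σ → ℕ)) (Finsupp.single (f a) 1) = 1))]
  simp

lemma myProdIndicator {I K : Type*} [Field K] [DecidableEq K] (X : I → SignType) (S : Finset I) :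
    (∏ c ∈ S, (if X c = (0 : SignType) then (1 : K) else 0))
      = if ∀ c ∈ S, X c = 0 then 1 else 0 := by
  classical
  by_cases h : ∀ c ∈ S, X c = 0
  · rw [if_pos h]; exact Finset.prod_eq_one fun c hc => if_pos (h c hc)
  · rw [if_neg h]
    push_neg at h
    obtain ⟨c, hc, hc0⟩ := h
    exact Finset.prod_eq_zero hc (if_neg hc0)

/-- let `F` be the closure of a set `C`, and let `B ⊊ C` be basic
for `F` (so `C` is nonbasic).  Then `∏_{c∈C} z_c − ∏_{b∈B} z_b` vanishes on the
big locus, i.e. lies in `I(Z_M)`; hence its top-degree component `∏_{c∈C} z_c`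
lies in `gr I(Z_M)`. -/
theorem nonbasic_product_in_gr (K : Type*) [Field K] {I : Type*}
    {M : Set (I → SignType)} (hM : IsCOM M)
    (C B : Finset I) (F : Set I)
    (hC : minimalFlatOf M (C : Set I) F)
    (hBC : B ⊂ C) (hB : IsBasic M B F) :
    ((∏ c ∈ C, MvPolynomial.X (c, (0 : SignType)))
        - (∏ b ∈ B, MvPolynomial.X (b, (0 : SignType)))
      ∈ vanishingIdeal K (bigLocus K M)) ∧
    (∏ c ∈ C, MvPolynomial.X (c, (0 : SignType)) : MvPolynomial (I × SignType) K)
      ∈ grIdeal K (bigLocus K M) := by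
  classical
  set dC : (I × SignType) →₀ ℕ := ∑ c ∈ C, Finsupp.single (c, (0 : SignType)) 1 with hdC
  set dB : (I × SignType) →₀ ℕ := ∑ b ∈ B, Finsupp.single (b, (0 : SignType)) 1 with hdB
  have hprodC : (∏ c ∈ C, MvPolynomial.X (c, (0 : SignType)) : MvPolynomial (I × SignType) K)
      = MvPolynomial.monomial dC 1 := by
    rw [hdC, MvPolynomial.monomial_sum_one]; rfl
  have hprodB : (∏ b ∈ B, MvPolynomial.X (b, (0 : SignType)) : MvPolynomial (I × SignType) K)
      = MvPolynomial.monomial dB 1 := by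
    rw [hdB, MvPolynomial.monomial_sum_one]; rfl
  have hdegC : dC.degree = C.card := degree_sum_single C _
  have hdegB : dB.degree = B.card := degree_sum_single B _
  have hcard : B.card < C.card := Finset.card_lt_card hBC
  have hne : dC ≠ dB := fun h => by rw [h, hdegB] at hdegC; omega
  -- the equivalence of vanishing conditions
  have hequiv : ∀ X ∈ M, ((∀ c ∈ C, X c = 0) ↔ (∀ b ∈ B, X b = 0)) := by
    intro X hX
    constructor
    · intro h b hb; exact h b (hBC.1 hb)
    · intro h
      have hflat : sflat X ∈ flats M := ⟨X, hX, rfl⟩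
      have hBsub : (B : Set I) ⊆ sflat X := fun b hb => h b hb
      have hFsub : F ⊆ sflat X := hB.1.2.2 (sflat X) hflat hBsub
      intro c hc
      exact hC.2.1.trans hFsub hc
  -- part 1 : membership in the vanishing ideal
  have part1 : ((∏ c ∈ C, MvPolynomial.X (c, (0 : SignType)))
        - (∏ b ∈ B, MvPolynomial.X (b, (0 : SignType)))
      ∈ vanishingIdeal K (bigLocus K M)) := by
    rw [vanishingIdeal]
    simp only [Ideal.mem_iInf, RingHom.mem_ker]
    rintro z ⟨X, hX, rfl⟩
    rw [map_sub]
    have heval : ∀ S : Finset I,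
        MvPolynomial.eval (bigPoint K X) (∏ c ∈ S, MvPolynomial.X (c, (0 : SignType)))
          = if ∀ c ∈ S, X c = 0 then (1 : K) else 0 := by
      intro S
      rw [map_prod, ← myProdIndicator X S]
      refine Finset.prod_congr rfl fun c _ => ?_
      simp only [MvPolynomial.eval_X, bigPoint]
    rw [heval C, heval B]
    by_cases h : ∀ c ∈ C, X c = 0
    · rw [if_pos h, if_pos ((hequiv X hX).1 h), sub_self]
    · rw [if_neg h, if_neg (fun hb => h ((hequiv X hX).2 hb)), sub_self]
  refine ⟨part1, ?_⟩
  -- part 2 : membership in the graded ideal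
  set f : MvPolynomial (I × SignType) K :=
      (∏ c ∈ C, MvPolynomial.X (c, (0 : SignType)))
        - (∏ b ∈ B, MvPolynomial.X (b, (0 : SignType))) with hf
  have hfm : f = MvPolynomial.monomial dC 1 - MvPolynomial.monomial dB 1 := by
    rw [hf, hprodC, hprodB]
  have hcoeff : MvPolynomial.coeff dC f = 1 := by
    rw [hfm, MvPolynomial.coeff_sub, MvPolynomial.coeff_monomial, MvPolynomial.coeff_monomial,
      if_pos rfl, if_neg (Ne.symm hne), sub_zero]
  have hf0 : f ≠ 0 := fun h => by simp [h, MvPolynomial.coeff_zero] at hcoeff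
  have hle : f.totalDegree ≤ C.card := by
    rw [hfm, sub_eq_add_neg]
    refine le_trans (MvPolynomial.totalDegree_add _ _) ?_
    rw [MvPolynomial.totalDegree_neg]
    refine max_le ?_ ?_
    · refine le_trans (MvPolynomial.totalDegree_monomial_le _ _) ?_
      show dC.degree ≤ C.card
      omega
    · refine le_trans (MvPolynomial.totalDegree_monomial_le _ _) ?_
      show dB.degree ≤ C.card
      omega
  have hge : C.card ≤ f.totalDegree := by
    have hmem : dC ∈ f.support := by
      rw [MvPolynomial.mem_support_iff, hcoeff]; exact one_ne_zero
    have h1 := MvPolynomial.le_totalDegree hmem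
    have h2 : dC.degree ≤ f.totalDegree := h1
    omega
  have htd : f.totalDegree = C.card := le_antisymm hle hge
  have hhomC : MvPolynomial.homogeneousComponent C.card
      ((MvPolynomial.monomial dC (1 : K))) = MvPolynomial.monomial dC 1 := by
    rw [MvPolynomial.homogeneousComponent_of_mem
      ((MvPolynomial.mem_homogeneousSubmodule _ _).2
        (MvPolynomial.isHomogeneous_monomial _ hdegC))]
    rw [if_pos rfl]
  have hhomB : MvPolynomial.homogeneousComponent C.card
      ((MvPolynomial.monomial dB (1 : K))) = 0 := by
    rw [MvPolynomial.homogeneousComponent_of_mem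
      ((MvPolynomial.mem_homogeneousSubmodule _ _).2
        (MvPolynomial.isHomogeneous_monomial (n := B.card) _ hdegB))]
    rw [if_neg (show ¬ C.card = B.card by omega)]
  have hcomp : MvPolynomial.homogeneousComponent f.totalDegree f
      = (∏ c ∈ C, MvPolynomial.X (c, (0 : SignType)) : MvPolynomial (I × SignType) K) := by
    rw [htd, hfm, map_sub, hhomC, hhomB, sub_zero, hprodC]
  exact Ideal.subset_span ⟨f, part1, hf0, hcomp.symm⟩
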